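/- arXiv:2107.09745 — 7 statements merged into one kernel-verified Lean document; each statement's English description precedes it below -/
import Mathlib

section
/- Let n ≥ 1, let x be a schedule, and let r : Fin n → ℝ be release dates with r j ≥ 0 for all j. Then there exist a machine i with job sequence j_1, …, j_{n_i} and a position k with 1 ≤ k ≤ n_i such that, writing j = j_k, one has C_{i,k−1}(x,r) ≤ r j and C_max(x,r) = r j + ∑_{l=k}^{n_i} p i j_l; that is, the makespan equals the release date of some critical job plus the total processing time of that job and all jobs following it on its machine. -/
open Finset

/-- A schedule assigns to each machine a finite sequence of jobs such that
every job occurs exactly once among all the sequences. -/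
structure Schedule (m n : ℕ) where
  seq : Fin m → List (Fin n)
  valid : ∀ j : Fin n, (∑ i : Fin m, (seq i).count j) = 1

variable {m n : ℕ}

/-- Completion time after processing the list `L` of jobs on a machine with
processing times `q` and release dates `r`; recursively `C₀ = 0`,
`C_k = q j_k + max C_{k-1} (r j_k)`. -/
def mComp (q r : Fin n → ℝ) (L : List (Fin n)) : ℝ :=
  L.foldl (fun c j => q j + max c (r j)) 0

/-- Makespan of the schedule `x` under the release dates `r`. -/
noncomputable def Cmax (p : Fin m → Fin n → ℝ) (x : Schedule m n) (r : Fin n → ℝ) : ℝ :=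
  ⨆ i : Fin m, mComp (p i) r (x.seq i)

/-- Optimal makespan `C*(r)`: the minimum of `Cmax` over all schedules. -/
noncomputable def Cstar (p : Fin m → Fin n → ℝ) (r : Fin n → ℝ) : ℝ :=
  ⨅ x : Schedule m n, Cmax p x r

/-- Regret of schedule `x` under scenario `r`. -/
noncomputable def regret (p : Fin m → Fin n → ℝ) (x : Schedule m n) (r : Fin n → ℝ) : ℝ :=
  Cmax p x r - Cstar p r

/-- The scenario box determined by the interval bounds. -/
def box (rlo rhi : Fin n → ℝ) : Set (Fin n → ℝ) :=
  {r | ∀ j, rlo j ≤ r j ∧ r j ≤ rhi j}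

/-- Worst-case regret `Z(x)`. -/
noncomputable def Zreg (p : Fin m → Fin n → ℝ) (x : Schedule m n) (rlo rhi : Fin n → ℝ) : ℝ :=
  sSup ((fun r => regret p x r) '' box rlo rhi)

/-- Extreme scenario `r̄^j`. -/
def extSc (rlo rhi : Fin n → ℝ) (j : Fin n) : Fin n → ℝ :=
  Function.update rlo j (rhi j)

/-- The set `H(x)` of jobs whose release interval is covered by the
processing of their predecessors (positions are 0-indexed: job at position
`k ≥ 1` has predecessors `(x.seq i).take k`). -/
def Hset (p : Fin m → Fin n → ℝ) (rlo rhi : Fin n → ℝ) (x : Schedule m n) : Set (Fin n) :=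
  {j | ∃ i : Fin m, ∃ k : ℕ, 1 ≤ k ∧ (x.seq i)[k]? = some j ∧
    rhi j ≤ mComp (p i) rlo ((x.seq i).take k)}

/-- Lower bound `LB₁(r) = max_j (r j + min_i p i j)`. -/
noncomputable def LB1 (p : Fin m → Fin n → ℝ) (r : Fin n → ℝ) : ℝ :=
  ⨆ j : Fin n, (r j + ⨅ i : Fin m, p i j)

/-- Lower bound `LB(r) = min_j r j + m⁻¹ ∑_j min_i p i j`. -/
noncomputable def LB0 (p : Fin m → Fin n → ℝ) (r : Fin n → ℝ) : ℝ :=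
  (⨅ j : Fin n, r j) + (m : ℝ)⁻¹ * ∑ j : Fin n, ⨅ i : Fin m, p i j

/-- `E_j(r)`: the jobs unavailable before `j`. -/
noncomputable def Ej (r : Fin n → ℝ) (j : Fin n) : Finset (Fin n) :=
  Finset.univ.filter fun t => r j ≤ r t

lemma Ej_nonempty (r : Fin n → ℝ) (j : Fin n) : (Ej r j).Nonempty :=
  ⟨j, by simp [Ej]⟩

/-- `W_j(E_j(r), p)` from the paper. -/
noncomputable def W2 (p : Fin m → Fin n → ℝ) (r : Fin n → ℝ) (j : Fin n) : ℝ :=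
  (Ej r j).inf' (Ej_nonempty r j) r + (m : ℝ)⁻¹ * ∑ t ∈ Ej r j, ⨅ i : Fin m, p i t

/-- Lower bound `LB₂(r)`. -/
noncomputable def LB2 (p : Fin m → Fin n → ℝ) (r : Fin n → ℝ) : ℝ :=
  ⨆ j : Fin n, W2 p r j

/-- `W̃_j(E_j(r), p_w)` from the paper, with `λ_j = ⌈|E_j(r)|/m⌉`. -/
noncomputable def W3 (p : Fin m → Fin n → ℝ) (r : Fin n → ℝ) (j : Fin n) : ℝ :=
  (Ej r j).inf' (Ej_nonempty r j) r +
    (⌈((Ej r j).card : ℝ) / (m : ℝ)⌉ : ℝ) *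
      (Ej r j).inf' (Ej_nonempty r j) (fun t => ⨅ i : Fin m, p i t)

/-- Lower bound `LB₃(r)`. -/
noncomputable def LB3 (p : Fin m → Fin n → ℝ) (r : Fin n → ℝ) : ℝ :=
  ⨆ j : Fin n, W3 p r j

/-- The combined lower bound `LB(r̄) = max {LB₁, LB₂, LB₃}`. -/
noncomputable def LBall (p : Fin m → Fin n → ℝ) (r : Fin n → ℝ) : ℝ :=
  max (LB1 p r) (max (LB2 p r) (LB3 p r))

lemma mComp_append (q r : Fin n → ℝ) (L : List (Fin n)) (j : Fin n) :
    mComp q r (L ++ [j]) = q j + max (mComp q r L) (r j) := by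
  simp [mComp, List.foldl_append]

lemma le_foldl_mComp (q r : Fin n → ℝ) (hq : ∀ j, 0 < q j) :
    ∀ (L : List (Fin n)) (c : ℝ), c ≤ L.foldl (fun c j => q j + max c (r j)) c := by
  intro L
  induction L with
  | nil => intro c; simp
  | cons a L ih =>
      intro c
      refine le_trans ?_ (ih (q a + max c (r a)))
      have := (hq a).le
      have : c ≤ max c (r a) := le_max_left _ _
      linarith [(hq a).le, le_max_left c (r a)]

lemma mComp_pos (q r : Fin n → ℝ) (hq : ∀ j, 0 < q j) (hr : ∀ j, 0 ≤ r j)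
    (L : List (Fin n)) (hL : L ≠ []) : 0 < mComp q r L := by
  obtain ⟨a, L', rfl⟩ := List.exists_cons_of_ne_nil hL
  have h1 : (0 : ℝ) < q a + max 0 (r a) := by
    have := hq a; have := le_max_left (0:ℝ) (r a); linarith
  calc (0:ℝ) < q a + max 0 (r a) := h1
    _ ≤ mComp q r (a :: L') := by
        simpa [mComp] using le_foldl_mComp q r hq L' (q a + max 0 (r a))

lemma crit_aux (q r : Fin n → ℝ) (hr : ∀ j, 0 ≤ r j) (L : List (Fin n)) :
    L ≠ [] →
    ∃ k, ∃ h : k < L.length, mComp q r (L.take k) ≤ r (L.get ⟨k, h⟩) ∧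
      mComp q r L = r (L.get ⟨k, h⟩) + ((L.drop k).map q).sum := by
  induction L using List.reverseRecOn with
  | nil => intro h; exact absurd rfl h
  | append_singleton L j ih =>
      intro _
      rcases eq_or_ne L [] with rfl | hL
      · refine ⟨0, by simp, ?_, ?_⟩
        · simpa [mComp] using hr j
        · simp [mComp, max_eq_right (hr j), add_comm]
      · rcases le_or_gt (mComp q r L) (r j) with hle | hlt
        · have hlen : L.length < (L ++ [j]).length := by simp
          have hget : (L ++ [j]).get ⟨L.length, hlen⟩ = j := by
            simp [List.get_eq_getElem]
          refine ⟨L.length, hlen, ?_, ?_⟩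
          · rw [hget]; simpa [List.take_left] using hle
          · rw [hget, mComp_append, max_eq_right hle, List.drop_left]
            simp [add_comm]
        · obtain ⟨k, h, h1, h2⟩ := ih hL
          have hlen : k < (L ++ [j]).length := by
            simp; omega
          have hget : (L ++ [j]).get ⟨k, hlen⟩ = L.get ⟨k, h⟩ := by
            simp [List.get_eq_getElem, List.getElem_append_left h]
          have htake : (L ++ [j]).take k = L.take k :=
            List.take_append_of_le_length h.le
          have hdrop : (L ++ [j]).drop k = L.drop k ++ [j] :=
            List.drop_append_of_le_length h.le
          refine ⟨k, hlen, ?_, ?_⟩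
          · rw [hget, htake]; exact h1
          · rw [hget, mComp_append, max_eq_left hlt.le, h2, hdrop]
            simp [List.map_append]
            ring

/-- the makespan equals the release date of some critical job
plus the total processing time of that job and all jobs following it on its
machine (positions written 0-indexed: the critical job sits at position `k`,
its predecessors are `(x.seq i).take k`, and the jobs from it onward are
`(x.seq i).drop k`). -/
theorem makespan_critical_job {m n : ℕ} (hm : 0 < m) (hn : 1 ≤ n)
    (p : Fin m → Fin n → ℝ) (hp : ∀ i j, 0 < p i j)
    (x : Schedule m n) (r : Fin n → ℝ) (hr : ∀ j, 0 ≤ r j) :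
    ∃ i : Fin m, ∃ k : ℕ, ∃ h : k < (x.seq i).length,
      mComp (p i) r ((x.seq i).take k) ≤ r ((x.seq i).get ⟨k, h⟩) ∧
      Cmax p x r =
        r ((x.seq i).get ⟨k, h⟩) + (((x.seq i).drop k).map (p i)).sum := by
  haveI : Nonempty (Fin m) := ⟨⟨0, hm⟩⟩
  set f : Fin m → ℝ := fun i => mComp (p i) r (x.seq i) with hf
  obtain ⟨i0, hi0⟩ := Finite.exists_max f
  have hCmax : Cmax p x r = f i0 := by
    apply le_antisymm
    · exact ciSup_le hi0
    · exact le_ciSup (Set.Finite.bddAbove (Set.finite_range f)) i0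
  -- some machine has a nonempty list
  have j0 : Fin n := ⟨0, hn⟩
  have hx := x.valid ⟨0, hn⟩
  have hex : ∃ i1 : Fin m, (⟨0, hn⟩ : Fin n) ∈ x.seq i1 := by
    by_contra hc
    push_neg at hc
    have : ∀ i : Fin m, (x.seq i).count (⟨0, hn⟩ : Fin n) = 0 := by
      intro i; exact List.count_eq_zero_of_not_mem (hc i)
    simp [this] at hx
  obtain ⟨i1, hi1⟩ := hex
  have hne1 : x.seq i1 ≠ [] := List.ne_nil_of_mem hi1
  have hpos : 0 < f i1 := mComp_pos _ _ (hp i1) hr _ hne1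
  have hne0 : x.seq i0 ≠ [] := by
    intro h0
    have : f i0 = 0 := by simp [hf, h0, mComp]
    have := hi0 i1
    linarith
  obtain ⟨k, h, h1, h2⟩ := crit_aux (p i0) r hr (x.seq i0) hne0
  exact ⟨i0, k, h, h1, by rw [hCmax]; exact h2⟩
end

section
/- Let n ≥ 1, let x be a schedule, and let r, r' : Fin n → ℝ be release-date vectors with r j ≥ 0 and r' j ≥ 0 for all j. Then the makespan is 1-Lipschitz in the release dates with respect to the supremum norm: |C_max(x,r) − C_max(x,r')| ≤ max over j of |r j − r' j|. -/
open Finset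

variable {m n : ℕ}

lemma foldl_lip {n : ℕ} (q r r' : Fin n → ℝ) (D : ℝ) (hD : ∀ j, |r j - r' j| ≤ D) :
    ∀ (L : List (Fin n)) (c c' : ℝ), |c - c'| ≤ D →
      |List.foldl (fun c j => q j + max c (r j)) c L -
        List.foldl (fun c j => q j + max c (r' j)) c' L| ≤ D := by
  intro L
  induction L with
  | nil => intro c c' h; simpa using h
  | cons j L ih =>
    intro c c' h
    simp only [List.foldl_cons]
    apply ih
    have : q j + max c (r j) - (q j + max c' (r' j)) = max c (r j) - max c' (r' j) := by ring
    rw [this]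
    exact le_trans (abs_max_sub_max_le_max _ _ _ _) (max_le h (hD j))

/-- the makespan is 1-Lipschitz in the release dates with
respect to the supremum norm. -/
theorem makespan_lipschitz {m n : ℕ} (hm : 0 < m) (hn : 1 ≤ n)
    (p : Fin m → Fin n → ℝ) (hp : ∀ i j, 0 < p i j)
    (x : Schedule m n) (r r' : Fin n → ℝ)
    (hr : ∀ j, 0 ≤ r j) (hr' : ∀ j, 0 ≤ r' j) :
    |Cmax p x r - Cmax p x r'| ≤ ⨆ j : Fin n, |r j - r' j| := by
  haveI : NeZero m := ⟨hm.ne'⟩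
  haveI : NeZero n := ⟨by omega⟩
  set D := ⨆ j : Fin n, |r j - r' j| with hDdef
  have hD : ∀ j, |r j - r' j| ≤ D := fun j =>
    le_ciSup (Set.Finite.bddAbove (Set.finite_range fun j => |r j - r' j|)) j
  have hD0 : 0 ≤ D := le_trans (abs_nonneg _) (hD ⟨0, Nat.pos_of_ne_zero (NeZero.ne n)⟩)
  have key : ∀ i : Fin m, |mComp (p i) r (x.seq i) - mComp (p i) r' (x.seq i)| ≤ D := by
    intro i
    exact foldl_lip (p i) r r' D hD (x.seq i) 0 0 (by simpa using hD0)
  have bdd : ∀ (s : Fin n → ℝ), BddAbove (Set.range fun i : Fin m => mComp (p i) s (x.seq i)) :=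
    fun s => Set.Finite.bddAbove (Set.finite_range _)
  rw [abs_sub_le_iff]
  constructor
  · rw [sub_le_iff_le_add]
    apply ciSup_le
    intro i
    calc mComp (p i) r (x.seq i) ≤ mComp (p i) r' (x.seq i) + D := by
          have := (abs_le.mp (key i)).2; linarith
      _ ≤ Cmax p x r' + D := by
          have := le_ciSup (bdd r') i; exact add_le_add_left this D
      _ = D + Cmax p x r' := by ring
  · rw [sub_le_iff_le_add]
    apply ciSup_le
    intro i
    calc mComp (p i) r' (x.seq i) ≤ mComp (p i) r (x.seq i) + D := by
          have := (abs_le.mp (key i)).1; linarith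
      _ ≤ Cmax p x r + D := by
          have := le_ciSup (bdd r) i; exact add_le_add_left this D
      _ = D + Cmax p x r := by ring
end

section
/- (Paper's Theorem: the worst-case scenario is extreme.) Let n ≥ 1 and let x be a schedule. Then for every scenario r ∈ R one has Q(x,r) ≤ max over jobs j of Q(x, r̄^j); consequently the supremum defining Z(x) is attained at an extreme scenario, i.e. Z(x) = max over j ∈ {1,…,n} of Q(x, r̄^j). -/
open Finset

variable {m n : ℕ}

-- auxiliary lemmas for the proof
private lemma foldl_mono_init (q r : Fin n → ℝ) (L : List (Fin n)) {c c' : ℝ} (h : c ≤ c') :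
    L.foldl (fun c j => q j + max c (r j)) c ≤ L.foldl (fun c j => q j + max c (r j)) c' := by
  induction L generalizing c c' with
  | nil => exact h
  | cons a t ih =>
    refine ih ?_; dsimp only; have := max_le_max h (le_refl (r a)); linarith

private lemma foldl_ge_init_add (q r : Fin n → ℝ)
    (L : List (Fin n)) (c : ℝ) :
    c + (L.map q).sum ≤ L.foldl (fun c j => q j + max c (r j)) c := by
  induction L generalizing c with
  | nil => simp
  | cons a t ih =>
    simp only [List.foldl_cons, List.map_cons, List.sum_cons]
    calc c + (q a + (t.map q).sum) = (q a + c) + (t.map q).sum := by ring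
    _ ≤ (q a + max c (r a)) + (t.map q).sum := by gcongr; exact le_max_left _ _
    _ ≤ _ := ih _

private lemma mComp_suffix_le (q r : Fin n → ℝ) (L : List (Fin n)) (k : ℕ) (j : Fin n)
    (hk : L[k]? = some j) :
    r j + ((L.drop k).map q).sum ≤ mComp q r L := by
  obtain ⟨hlt, hget⟩ := List.getElem?_eq_some_iff.mp hk
  have hdrop : L.drop k = j :: L.drop (k + 1) := by
    rw [List.drop_eq_getElem_cons hlt, hget]
  have hsplit : L = L.take k ++ L.drop k := (List.take_append_drop k L).symm
  rw [mComp]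
  conv_rhs => rw [hsplit]
  rw [List.foldl_append, hdrop]
  set c0 := (L.take k).foldl (fun c j => q j + max c (r j)) 0 with hc0
  simp only [List.foldl_cons]
  calc r j + ((j :: L.drop (k+1)).map q).sum
      = (q j + r j) + ((L.drop (k+1)).map q).sum := by simp; ring
    _ ≤ (q j + max c0 (r j)) + ((L.drop (k+1)).map q).sum := by
        gcongr; exact le_max_right _ _
    _ ≤ _ := foldl_ge_init_add q r _ _

private lemma mComp_nonneg (q r : Fin n → ℝ) (hq : ∀ j, 0 ≤ q j) (L : List (Fin n)) :
    0 ≤ mComp q r L := by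
  have h1 := foldl_ge_init_add q r L 0
  have h2 : (0:ℝ) ≤ (L.map q).sum :=
    List.sum_nonneg (by intro a ha; obtain ⟨b, _, rfl⟩ := List.mem_map.mp ha; exact hq b)
  simpa [mComp] using le_trans (by linarith : (0:ℝ) ≤ 0 + (L.map q).sum) h1

private lemma mComp_mono_r (q : Fin n → ℝ) {r r' : Fin n → ℝ} (h : ∀ j, r j ≤ r' j)
    (L : List (Fin n)) : mComp q r L ≤ mComp q r' L := by
  suffices H : ∀ c c' : ℝ, c ≤ c' →
      L.foldl (fun c j => q j + max c (r j)) c ≤ L.foldl (fun c j => q j + max c (r' j)) c' from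
    H 0 0 le_rfl
  induction L with
  | nil => intro c c' h'; exact h'
  | cons a t ih =>
    intro c c' h'
    simp only [List.foldl_cons]
    exact ih _ _ (by have := max_le_max h' (h a); linarith)

private lemma mComp_shift (q r : Fin n → ℝ) (δ : ℝ) (hδ : 0 ≤ δ) (L : List (Fin n)) :
    mComp q (fun t => r t + δ) L ≤ mComp q r L + δ := by
  have key : ∀ c : ℝ, L.foldl (fun c j => q j + max c (r j + δ)) (c + δ)
      = L.foldl (fun c j => q j + max c (r j)) c + δ := by
    induction L with
    | nil => intro c; simp
    | cons a t ih =>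
      intro c
      simp only [List.foldl_cons]
      rw [show q a + max (c + δ) (r a + δ) = (q a + max c (r a)) + δ by
        rw [max_add_add_right]; ring]
      exact ih _
  calc mComp q (fun t => r t + δ) L
      ≤ L.foldl (fun c j => q j + max c (r j + δ)) (0 + δ) :=
        foldl_mono_init q _ L (by linarith)
    _ = _ := key 0

private lemma mComp_le_shift (q : Fin n → ℝ) {r r' : Fin n → ℝ} {δ : ℝ} (hδ : 0 ≤ δ)
    (h : ∀ t, r' t ≤ r t + δ) (L : List (Fin n)) :
    mComp q r' L ≤ mComp q r L + δ :=
  (mComp_mono_r q h L).trans (mComp_shift q r δ hδ L)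

private lemma mComp_exists_critical (q r : Fin n → ℝ) (hr : ∀ j, 0 ≤ r j)
    (L : List (Fin n)) (hL : L ≠ []) :
    ∃ k j, L[k]? = some j ∧ mComp q r L = r j + ((L.drop k).map q).sum := by
  induction L using List.reverseRecOn with
  | nil => exact absurd rfl hL
  | append_singleton L' a ih =>
    have hfold : mComp q r (L' ++ [a]) = q a + max (mComp q r L') (r a) := by
      simp [mComp, List.foldl_append]
    rcases le_or_gt (mComp q r L') (r a) with h | h
    · refine ⟨L'.length, a, ?_, ?_⟩
      · simp
      · rw [hfold, max_eq_right h, List.drop_append_of_le_length le_rfl]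
        simp
        ring
    · have hL' : L' ≠ [] := by
        rintro rfl
        simp [mComp] at h
        exact absurd (hr a) (not_le.mpr h)
      obtain ⟨k, j, hk, he⟩ := ih hL'
      have hkl : k < L'.length := (List.getElem?_eq_some_iff.mp hk).1
      refine ⟨k, j, ?_, ?_⟩
      · rw [List.getElem?_append_left hkl]; exact hk
      · rw [hfold, max_eq_left h.le, he, List.drop_append_of_le_length hkl.le]
        simp
        ring

private def trivSched (hm : 0 < m) : Schedule m n where
  seq i := if i = ⟨0, hm⟩ then List.finRange n else []
  valid j := by
    rw [Finset.sum_eq_single (⟨0, hm⟩ : Fin m)]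
    · simp [List.count_eq_one_of_mem (List.nodup_finRange n) (List.mem_finRange j)]
    · intro b _ hb; simp [hb]
    · intro h; exact absurd (Finset.mem_univ _) h

private lemma Cmax_nonneg (hm : 0 < m) (p : Fin m → Fin n → ℝ) (hp : ∀ i j, 0 < p i j)
    {r : Fin n → ℝ} (hr : ∀ j, 0 ≤ r j) (y : Schedule m n) : 0 ≤ Cmax p y r := by
  haveI : Nonempty (Fin m) := ⟨⟨0, hm⟩⟩
  have h1 : 0 ≤ mComp (p ⟨0, hm⟩) r (y.seq ⟨0, hm⟩) :=
    mComp_nonneg _ _ (fun j => (hp _ j).le) _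
  have h2 : mComp (p ⟨0, hm⟩) r (y.seq ⟨0, hm⟩) ≤ Cmax p y r :=
    le_ciSup (Set.Finite.bddAbove
      (Set.finite_range fun i => mComp (p i) r (y.seq i))) ⟨0, hm⟩
  exact h1.trans h2

private lemma regret_le_ext {m n : ℕ} (hm : 0 < m) (hn : 1 ≤ n)
    (p : Fin m → Fin n → ℝ) (hp : ∀ i j, 0 < p i j)
    (rlo rhi : Fin n → ℝ) (hlo : ∀ j, 0 ≤ rlo j) (hlt : ∀ j, rlo j < rhi j)
    (x : Schedule m n) (r : Fin n → ℝ) (hr : r ∈ box rlo rhi) :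
    ∃ j, regret p x r ≤ regret p x (extSc rlo rhi j) := by
  haveI : Nonempty (Fin m) := ⟨⟨0, hm⟩⟩
  haveI : Nonempty (Fin n) := ⟨⟨0, hn⟩⟩
  haveI : Nonempty (Schedule m n) := ⟨trivSched hm⟩
  have hr0 : ∀ j, 0 ≤ r j := fun j => (hlo j).trans (hr j).1
  have bddA : ∀ (y : Schedule m n) (r'' : Fin n → ℝ),
      BddAbove (Set.range fun i => mComp (p i) r'' (y.seq i)) :=
    fun y r'' => Set.Finite.bddAbove (Set.finite_range _)
  obtain ⟨i, hi⟩ := Finite.exists_max fun i => mComp (p i) r (x.seq i)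
  have hCmax : Cmax p x r = mComp (p i) r (x.seq i) :=
    le_antisymm (ciSup_le hi) (le_ciSup (bddA x r) i)
  have hne : x.seq i ≠ [] := by
    intro hempty
    -- job 0 sits somewhere; that machine has positive completion time
    set j0 : Fin n := ⟨0, hn⟩
    have h1 := x.valid j0
    have hex : ∃ i', 0 < (x.seq i').count j0 := by
      by_contra hc
      push_neg at hc
      rw [Finset.sum_eq_zero (fun i' _ => Nat.le_zero.mp (hc i'))] at h1
      exact absurd h1 (by norm_num)
    obtain ⟨i', hi'⟩ := hex
    obtain ⟨k', hk'len, hk'get⟩ := List.getElem_of_mem (List.count_pos_iff.mp hi')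
    have hk' : (x.seq i')[k']? = some j0 := List.getElem?_eq_some_iff.mpr ⟨hk'len, hk'get⟩
    have hsuf := mComp_suffix_le (p i') r _ k' _ hk'
    have hdrop : (x.seq i').drop k' = j0 :: (x.seq i').drop (k'+1) := by
      rw [List.drop_eq_getElem_cons hk'len, hk'get]
    have hrest : (0:ℝ) ≤ (((x.seq i').drop (k'+1)).map (p i')).sum :=
      List.sum_nonneg (by intro a ha; obtain ⟨b, _, rfl⟩ := List.mem_map.mp ha
                          exact (hp i' b).le)
    have hsum : p i' j0 + (((x.seq i').drop (k'+1)).map (p i')).sum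
        = (((x.seq i').drop k').map (p i')).sum := by rw [hdrop]; simp
    have hpos : 0 < mComp (p i') r (x.seq i') := by
      have := hp i' j0
      have := hr0 j0
      linarith [hsuf, hsum.symm ▸ hsuf]
    have h3 := hi i'
    rw [hempty] at h3
    have h5 : mComp (p i) r ([] : List (Fin n)) = 0 := rfl
    linarith
  obtain ⟨k, j, hk, he⟩ := mComp_exists_critical (p i) r hr0 _ hne
  refine ⟨j, ?_⟩
  set r' := extSc rlo rhi j with hr'def
  set δ := rhi j - r j with hδdef
  have hδ : 0 ≤ δ := by have := (hr j).2; simp only [hδdef]; linarith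
  have hr'j : r' j = rhi j := by simp [hr'def, extSc]
  have hr'0 : ∀ t, 0 ≤ r' t := by
    intro t
    by_cases ht : t = j
    · subst ht; rw [hr'j]; exact (hlo t).trans (hlt t).le
    · simp [hr'def, extSc, Function.update_of_ne ht]; exact hlo t
  have hle : ∀ t, r' t ≤ r t + δ := by
    intro t
    by_cases ht : t = j
    · subst ht; rw [hr'j]; simp only [hδdef]; linarith
    · simp only [hr'def, extSc, Function.update_of_ne ht]
      have := (hr t).1; linarith
  have hA : Cmax p x r + δ ≤ Cmax p x r' := by
    have h1 := mComp_suffix_le (p i) r' (x.seq i) k j hk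
    have h3 := le_ciSup (bddA x r') i
    rw [hCmax, he]
    rw [hr'j] at h1
    have : Cmax p x r' = ⨆ i' : Fin m, mComp (p i') r' (x.seq i') := rfl
    simp only [hδdef]
    unfold Cmax
    linarith [h1, h3]
  have hB : ∀ y : Schedule m n, Cmax p y r' ≤ Cmax p y r + δ := by
    intro y
    refine ciSup_le fun i' => ?_
    have h1 := mComp_le_shift (p i') hδ hle (y.seq i')
    have h2 := le_ciSup (bddA y r) i'
    unfold Cmax
    linarith
  have bddB : BddBelow (Set.range fun y : Schedule m n => Cmax p y r') := by
    refine ⟨0, ?_⟩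
    rintro _ ⟨y, rfl⟩
    exact Cmax_nonneg hm p hp hr'0 y
  have hCstar : Cstar p r' ≤ Cstar p r + δ := by
    have h0 : ∀ y : Schedule m n, Cstar p r' - δ ≤ Cmax p y r := by
      intro y
      have h1 : Cstar p r' ≤ Cmax p y r' := ciInf_le bddB y
      linarith [hB y]
    have h2 : Cstar p r' - δ ≤ Cstar p r := le_ciInf h0
    linarith
  simp only [regret]
  linarith

/-- Paper's Theorem: the worst-case scenario is extreme:
every scenario's regret is dominated by the regret of some extreme scenario,
and the worst-case regret is attained on the extreme scenarios. -/
theorem worst_case_scenario_extreme {m n : ℕ} (hm : 0 < m) (hn : 1 ≤ n)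
    (p : Fin m → Fin n → ℝ) (hp : ∀ i j, 0 < p i j)
    (rlo rhi : Fin n → ℝ) (hlo : ∀ j, 0 ≤ rlo j) (hlt : ∀ j, rlo j < rhi j)
    (x : Schedule m n) :
    (∀ r ∈ box rlo rhi,
        regret p x r ≤ ⨆ j : Fin n, regret p x (extSc rlo rhi j)) ∧
      Zreg p x rlo rhi = ⨆ j : Fin n, regret p x (extSc rlo rhi j) := by
  haveI : Nonempty (Fin n) := ⟨⟨0, hn⟩⟩
  have bddS : BddAbove (Set.range fun j : Fin n => regret p x (extSc rlo rhi j)) :=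
    Set.Finite.bddAbove (Set.finite_range _)
  have part1 : ∀ r ∈ box rlo rhi,
      regret p x r ≤ ⨆ j : Fin n, regret p x (extSc rlo rhi j) := by
    intro r hr
    obtain ⟨j, hj⟩ := regret_le_ext hm hn p hp rlo rhi hlo hlt x r hr
    exact hj.trans (le_ciSup bddS j)
  refine ⟨part1, ?_⟩
  have hmemext : ∀ j, extSc rlo rhi j ∈ box rlo rhi := by
    intro j t
    by_cases ht : t = j
    · subst ht
      constructor
      · simp [extSc]; exact (hlt t).le
      · simp [extSc]
    · constructor
      · simp [extSc, Function.update_of_ne ht]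
      · simp [extSc, Function.update_of_ne ht]; exact (hlt t).le
  have hne : ((fun r => regret p x r) '' box rlo rhi).Nonempty :=
    ⟨_, ⟨rlo, fun t => ⟨le_rfl, (hlt t).le⟩, rfl⟩⟩
  have hbdd : ∀ a ∈ (fun r => regret p x r) '' box rlo rhi,
      a ≤ ⨆ j : Fin n, regret p x (extSc rlo rhi j) := by
    rintro a ⟨r, hr, rfl⟩
    exact part1 r hr
  apply le_antisymm
  · exact csSup_le hne hbdd
  · exact ciSup_le fun j => le_csSup ⟨_, hbdd⟩ ⟨extSc rlo rhi j, hmemext j, rfl⟩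
end

section
/- (Lower bound LB₂.) Let x be a schedule and let r : Fin n → ℝ with r j ≥ 0 for all j, n ≥ 1. For every job j let E_j(r) = { t : r t ≥ r j } be the set of jobs unavailable before j. Then for every job j, C_max(x,r) ≥ min over t ∈ E_j(r) of r t + (1/m) · ∑ over t ∈ E_j(r) of ( min over machines i of p i t ). In particular C*(r) ≥ LB₂(r) where LB₂(r) is the maximum of this quantity over all jobs j. -/
open Finset

variable {m n : ℕ}

/-- Accumulator lower bound: the foldl dominates the accumulator plus the
total (minimal) processing of the filtered jobs. -/
lemma foldl_ge_acc (pi r q : Fin n → ℝ) (hpi : ∀ s, 0 < pi s)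
    (hqp : ∀ s, q s ≤ pi s) (P : Fin n → Bool) :
    ∀ (L : List (Fin n)) (c : ℝ),
      c + ((L.filter P).map q).sum ≤ L.foldl (fun a s => pi s + max a (r s)) c := by
  intro L
  induction L with
  | nil => simp
  | cons a L ih =>
    intro c
    by_cases h : P a
    · rw [List.filter_cons_of_pos h, List.map_cons, List.sum_cons, List.foldl_cons]
      have h1 : c + (q a + ((L.filter P).map q).sum)
          ≤ (pi a + max c (r a)) + ((L.filter P).map q).sum := by
        have := hqp a
        have := le_max_left c (r a)
        nlinarith
      exact h1.trans (ih _)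
    · rw [List.filter_cons_of_neg h, List.foldl_cons]
      have h1 : c + ((L.filter P).map q).sum
          ≤ (pi a + max c (r a)) + ((L.filter P).map q).sum := by
        have := hpi a
        have := le_max_left c (r a)
        nlinarith
      exact h1.trans (ih _)

/-- If some filtered job appears in the list, the foldl also dominates the
common release lower bound plus the total processing of filtered jobs. -/
lemma foldl_ge_rel (pi r q : Fin n → ℝ) (hpi : ∀ s, 0 < pi s)
    (hqp : ∀ s, q s ≤ pi s) (P : Fin n → Bool) (rj : ℝ)
    (hrel : ∀ s, P s = true → rj ≤ r s) :
    ∀ (L : List (Fin n)) (c : ℝ), 0 ≤ c → (∃ s ∈ L, P s = true) →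
      rj + ((L.filter P).map q).sum ≤ L.foldl (fun a s => pi s + max a (r s)) c := by
  intro L
  induction L with
  | nil => rintro c _ ⟨s, hs, _⟩; simp at hs
  | cons a L ih =>
    rintro c hc ⟨s, hs, hPs⟩
    by_cases h : P a
    · rw [List.filter_cons_of_pos h, List.map_cons, List.sum_cons, List.foldl_cons]
      have h1 : rj + (q a + ((L.filter P).map q).sum)
          ≤ (pi a + max c (r a)) + ((L.filter P).map q).sum := by
        have := hqp a
        have := hrel a h
        have := le_max_right c (r a)
        nlinarith
      exact h1.trans (foldl_ge_acc pi r q hpi hqp P L _)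
    · rw [List.filter_cons_of_neg h, List.foldl_cons]
      have hs' : s ∈ L := by
        rcases List.mem_cons.mp hs with rfl | hs'
        · exact absurd hPs h
        · exact hs'
      refine ih _ ?_ ⟨s, hs', hPs⟩
      have := (hpi a).le
      have := le_max_left c (r a)
      nlinarith

lemma list_map_sum_eq (g : Fin n → ℝ) (L : List (Fin n)) :
    (L.map g).sum = ∑ t : Fin n, (L.count t : ℝ) * g t := by
  rw [Finset.sum_list_map_count]
  rw [Finset.sum_subset (Finset.subset_univ L.toFinset)
    (fun t _ ht => by simp [List.count_eq_zero_of_not_mem (by simpa using ht)])]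
  exact Finset.sum_congr rfl fun t _ => by simp [nsmul_eq_mul]

/-- Lower bound LB₂: for every job `j`,
`min_{t ∈ E_j(r)} r t + m⁻¹ ∑_{t ∈ E_j(r)} min_i p i t` is a lower bound on
the makespan; hence `C*(r) ≥ LB₂(r)`. -/
theorem lower_bound_LB2 {m n : ℕ} (hm : 0 < m) (hn : 1 ≤ n)
    (p : Fin m → Fin n → ℝ) (hp : ∀ i j, 0 < p i j)
    (x : Schedule m n) (r : Fin n → ℝ) (hr : ∀ j, 0 ≤ r j) :
    (∀ j : Fin n, W2 p r j ≤ Cmax p x r) ∧ LB2 p r ≤ Cstar p r := by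
  classical
  have hne : ∀ t : Fin n, Nonempty (Fin m) := fun _ => ⟨⟨0, hm⟩⟩
  haveI : Nonempty (Fin m) := ⟨⟨0, hm⟩⟩
  haveI : Nonempty (Fin n) := ⟨⟨0, hn⟩⟩
  have hbound : ∀ (j : Fin n) (y : Schedule m n), W2 p r j ≤ Cmax p y r := by
    intro j y
    set q : Fin n → ℝ := fun t => ⨅ i : Fin m, p i t with hqdef
    have hq0 : ∀ t, 0 ≤ q t := fun t => le_ciInf fun i => (hp i t).le
    have hqp : ∀ i t, q t ≤ p i t := fun i t =>
      ciInf_le (Set.Finite.bddBelow (Set.finite_range fun i => p i t)) i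
    set P : Fin n → Bool := fun t => decide (r j ≤ r t) with hPdef
    have hrel : ∀ s, P s = true → r j ≤ r s := fun s hs => of_decide_eq_true hs
    set msum : Fin m → ℝ := fun i => (((y.seq i).filter P).map q).sum with hmsumdef
    have hmsum0 : ∀ i, 0 ≤ msum i := fun i =>
      List.sum_nonneg (by rintro a ha; rcases List.mem_map.mp ha with ⟨t, _, rfl⟩; exact hq0 t)
    have hCmax_ge : ∀ i, mComp (p i) r (y.seq i) ≤ Cmax p y r := by
      intro i
      unfold Cmax
      exact le_ciSup (Set.Finite.bddAbove (Set.finite_range fun i => mComp (p i) r (y.seq i))) i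
    -- job j is on some machine
    obtain ⟨i0, hi0⟩ : ∃ i, j ∈ y.seq i := by
      by_contra h
      push_neg at h
      have : ∑ i : Fin m, (y.seq i).count j = 0 :=
        Finset.sum_eq_zero fun i _ => List.count_eq_zero_of_not_mem (h i)
      rw [y.valid j] at this
      exact one_ne_zero this
    have hrj_le : r j ≤ Cmax p y r := by
      have h1 := foldl_ge_rel (p i0) r q (hp i0) (hqp i0) P (r j) hrel
        (y.seq i0) 0 le_rfl ⟨j, hi0, by simp [hPdef]⟩
      have : r j ≤ mComp (p i0) r (y.seq i0) := by
        have := hmsum0 i0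
        unfold mComp
        rw [hmsumdef] at *
        linarith [h1]
      exact this.trans (hCmax_ge i0)
    have key : ∀ i, r j + msum i ≤ Cmax p y r := by
      intro i
      by_cases hE : ∃ s ∈ y.seq i, P s = true
      · have h1 := foldl_ge_rel (p i) r q (hp i) (hqp i) P (r j) hrel
          (y.seq i) 0 le_rfl hE
        exact h1.trans (hCmax_ge i)
      · push_neg at hE
        have hnil : (y.seq i).filter P = [] :=
          List.filter_eq_nil_iff.mpr (fun a ha => by simpa using hE a ha)
        have : msum i = 0 := by rw [hmsumdef]; simp [hnil]
        rw [this, add_zero]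
        exact hrj_le
    -- the sum of msum over machines equals the total over E_j
    have hcount : ∀ t : Fin n,
        (∑ i : Fin m, (((y.seq i).filter P).count t : ℝ)) = if P t then 1 else 0 := by
      intro t
      by_cases ht : P t
      · rw [if_pos ht]
        have : ∀ i : Fin m, ((y.seq i).filter P).count t = (y.seq i).count t :=
          fun i => List.count_filter ht
        simp only [this]
        rw [← Nat.cast_sum, y.valid t, Nat.cast_one]
      · rw [if_neg ht]
        refine Finset.sum_eq_zero fun i _ => ?_
        have : t ∉ (y.seq i).filter P := fun hmem =>
          ht (List.of_mem_filter hmem)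
        simp [List.count_eq_zero_of_not_mem this]
    have hsum : ∑ i : Fin m, msum i = ∑ t ∈ Ej r j, q t := by
      simp only [hmsumdef]
      have h1 : ∀ i : Fin m, (((y.seq i).filter P).map q).sum
          = ∑ t : Fin n, (((y.seq i).filter P).count t : ℝ) * q t :=
        fun i => list_map_sum_eq q _
      simp only [h1]
      rw [Finset.sum_comm]
      have h2 : ∀ t : Fin n, (∑ i : Fin m, (((y.seq i).filter P).count t : ℝ) * q t)
          = (if P t then 1 else 0) * q t := by
        intro t
        rw [← Finset.sum_mul, hcount t]
      simp only [h2, ite_mul, one_mul, zero_mul]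
      rw [← Finset.sum_filter]
      refine Finset.sum_congr ?_ fun _ _ => rfl
      unfold Ej
      refine Finset.filter_congr fun t _ => ?_
      simp [hPdef]
    -- summing the per-machine bound
    have hmC : (m : ℝ) * r j + ∑ t ∈ Ej r j, q t ≤ (m : ℝ) * Cmax p y r := by
      have h1 : ∑ i : Fin m, (r j + msum i) ≤ ∑ i : Fin m, Cmax p y r :=
        Finset.sum_le_sum fun i _ => key i
      rw [Finset.sum_add_distrib, Finset.sum_const, Finset.sum_const, hsum] at h1
      simpa [nsmul_eq_mul] using h1
    have hm' : (0 : ℝ) < m := by exact_mod_cast hm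
    have hW2le : W2 p r j ≤ r j + (m : ℝ)⁻¹ * ∑ t ∈ Ej r j, q t := by
      unfold W2
      have : (Ej r j).inf' (Ej_nonempty r j) r ≤ r j :=
        Finset.inf'_le r (by simp [Ej])
      linarith
    refine hW2le.trans ?_
    have : r j + (m : ℝ)⁻¹ * ∑ t ∈ Ej r j, q t
        = (m : ℝ)⁻¹ * ((m : ℝ) * r j + ∑ t ∈ Ej r j, q t) := by
      field_simp
    rw [this]
    calc (m : ℝ)⁻¹ * ((m : ℝ) * r j + ∑ t ∈ Ej r j, q t)
        ≤ (m : ℝ)⁻¹ * ((m : ℝ) * Cmax p y r) :=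
          mul_le_mul_of_nonneg_left hmC (inv_nonneg.mpr hm'.le)
      _ = Cmax p y r := by field_simp
  refine ⟨fun j => hbound j x, ?_⟩
  haveI : Nonempty (Schedule m n) := ⟨x⟩
  exact ciSup_le fun j => le_ciInf fun y => hbound j y
end

section
/- (Lower bound LB₃.) Let x be a schedule and let r : Fin n → ℝ with r j ≥ 0 for all j, n ≥ 1. For every job j let E_j(r) = { t : r t ≥ r j }, let γ_j = |E_j(r)|, λ_j = ⌈γ_j / m⌉, and p_w = min over t ∈ E_j(r) of ( min over machines i of p i t ). Then for every job j, C_max(x,r) ≥ min over t ∈ E_j(r) of r t + λ_j · p_w. In particular C*(r) ≥ LB₃(r) where LB₃(r) is the maximum of this quantity over all jobs j. -/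
open Finset

variable {m n : ℕ}

lemma foldl_ge_acc_s14 (q r : Fin n → ℝ) (E : Finset (Fin n)) (π : ℝ)
    (hq : ∀ t, 0 < q t) (hπ : 0 ≤ π) (hqE : ∀ t ∈ E, π ≤ q t) :
    ∀ (L : List (Fin n)) (c : ℝ),
      c + (L.countP (fun t => decide (t ∈ E))) * π ≤
        L.foldl (fun c j => q j + max c (r j)) c := by
  intro L
  induction L with
  | nil => intro c; simp
  | cons a L ih =>
    intro c
    have h1 : c + (if a ∈ E then π else 0) ≤ q a + max c (r a) := by
      by_cases h : a ∈ E
      · simp only [h, if_true]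
        have := hqE a h
        have := le_max_left c (r a)
        linarith
      · simp only [h, if_false]
        have := hq a
        have := le_max_left c (r a)
        linarith
    have h2 := ih (q a + max c (r a))
    simp only [List.countP_cons, List.foldl_cons]
    by_cases h : a ∈ E <;> simp [h] at h1 ⊢ <;> push_cast <;> nlinarith

lemma foldl_ge_release (q r : Fin n → ℝ) (E : Finset (Fin n)) (π ρ : ℝ)
    (hq : ∀ t, 0 < q t) (hπ : 0 ≤ π) (hqE : ∀ t ∈ E, π ≤ q t)
    (hρE : ∀ t ∈ E, ρ ≤ r t) :
    ∀ (L : List (Fin n)) (c : ℝ), 1 ≤ L.countP (fun t => decide (t ∈ E)) →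
      ρ + (L.countP (fun t => decide (t ∈ E))) * π ≤
        L.foldl (fun c j => q j + max c (r j)) c := by
  intro L
  induction L with
  | nil => intro c h; simp at h
  | cons a L ih =>
    intro c hcnt
    simp only [List.countP_cons, List.foldl_cons]
    by_cases h : a ∈ E
    · have h2 := foldl_ge_acc_s14 q r E π hq hπ hqE L (q a + max c (r a))
      have h3 : ρ + π ≤ q a + max c (r a) := by
        have := hqE a h
        have := hρE a h
        have := le_max_right c (r a)
        linarith
      simp only [h, decide_true, if_true] at *
      push_cast
      nlinarith [h2]
    · have hcnt' : 1 ≤ L.countP (fun t => decide (t ∈ E)) := by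
        simpa [h] using hcnt
      have := ih (q a + max c (r a)) hcnt'
      simp only [h, decide_eq_true_eq, if_neg h] at *
      simpa using this

lemma countP_eq_sum_count (E : Finset (Fin n)) (L : List (Fin n)) :
    L.countP (fun t => decide (t ∈ E)) = ∑ t ∈ E, L.count t := by
  induction L with
  | nil => simp
  | cons a L ih =>
    simp only [List.countP_cons, List.count_cons, Finset.sum_add_distrib, ih]
    congr 1
    simp [Finset.sum_ite_eq' E a (fun _ => 1)]

/-- Lower bound LB₃: for every job `j`,
`min_{t ∈ E_j(r)} r t + ⌈|E_j(r)|/m⌉ · min_{t ∈ E_j(r)} min_i p i t` is a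
lower bound on the makespan; hence `C*(r) ≥ LB₃(r)`. -/
theorem lower_bound_LB3 {m n : ℕ} (hm : 0 < m) (hn : 1 ≤ n)
    (p : Fin m → Fin n → ℝ) (hp : ∀ i j, 0 < p i j)
    (x : Schedule m n) (r : Fin n → ℝ) (hr : ∀ j, 0 ≤ r j) :
    (∀ j : Fin n, W3 p r j ≤ Cmax p x r) ∧ LB3 p r ≤ Cstar p r := by
  have key : ∀ (y : Schedule m n) (j : Fin n), W3 p r j ≤ Cmax p y r := by
    intro y j
    haveI : Nonempty (Fin m) := Fin.pos_iff_nonempty.mp hm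
    set E := Ej r j with hE
    set π := E.inf' (Ej_nonempty r j) (fun t => ⨅ i : Fin m, p i t) with hπdef
    -- nonnegativity of π
    have hiInf_nonneg : ∀ t, (0:ℝ) ≤ ⨅ i : Fin m, p i t := fun t =>
      le_ciInf fun i => (hp i t).le
    have hπ : 0 ≤ π := by
      rw [hπdef]
      exact le_inf' _ _ fun t _ => hiInf_nonneg t
    have hqE : ∀ i, ∀ t ∈ E, π ≤ p i t := by
      intro i t ht
      refine le_trans (inf'_le _ ht) ?_
      exact ciInf_le (Set.Finite.bddBelow (Set.finite_range _)) i
    have hρE : ∀ t ∈ E, r j ≤ r t := by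
      intro t ht
      simpa [hE, Ej] using ht
    -- min release over E equals r j
    have hinf_r : E.inf' (Ej_nonempty r j) r = r j := by
      apply le_antisymm
      · exact inf'_le _ (by simp [hE, Ej])
      · exact le_inf' _ _ hρE
    -- counting
    have hsum : ∑ i : Fin m, (y.seq i).countP (fun t => decide (t ∈ E)) = E.card := by
      simp only [countP_eq_sum_count]
      rw [Finset.sum_comm]
      simp [y.valid]
    -- pigeonhole
    obtain ⟨i, -, hi⟩ : ∃ i ∈ Finset.univ (α := Fin m),
        E.card ≤ m * (y.seq i).countP (fun t => decide (t ∈ E)) := by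
      apply Finset.exists_le_of_sum_le ⟨⟨0, hm⟩, Finset.mem_univ _⟩
      rw [← Finset.mul_sum, hsum]
      simp [mul_comm]
    set k := (y.seq i).countP (fun t => decide (t ∈ E)) with hk
    have hcard : 1 ≤ E.card := Finset.card_pos.mpr (Ej_nonempty r j)
    have hk1 : 1 ≤ k := by
      by_contra h
      interval_cases k <;> omega
    have hceil : (⌈(E.card : ℝ) / (m : ℝ)⌉ : ℝ) ≤ (k : ℝ) := by
      have : ⌈(E.card : ℝ) / (m : ℝ)⌉ ≤ (k : ℤ) := by
        rw [Int.ceil_le, div_le_iff₀ (by positivity)]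
        have hi' : E.card ≤ k * m := hi.trans_eq (Nat.mul_comm m k)
        exact_mod_cast hi'
      exact_mod_cast this
    have hfold := foldl_ge_release (p i) r E π (r j) (hp i) hπ (hqE i) hρE
      (y.seq i) 0 hk1
    have hmle : mComp (p i) r (y.seq i) ≤ Cmax p y r := by
      rw [Cmax]
      exact le_ciSup (f := fun i => mComp (p i) r (y.seq i)) (Set.Finite.bddAbove (Set.finite_range _)) i
    have hW3 : W3 p r j = r j + (⌈(E.card : ℝ) / (m : ℝ)⌉ : ℝ) * π := by
      rw [W3, hinf_r]
    rw [hW3]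
    have : (⌈(E.card : ℝ) / (m : ℝ)⌉ : ℝ) * π ≤ (k : ℝ) * π :=
      mul_le_mul_of_nonneg_right hceil hπ
    calc r j + (⌈(E.card : ℝ) / (m : ℝ)⌉ : ℝ) * π
        ≤ r j + (k : ℝ) * π := by linarith
      _ ≤ mComp (p i) r (y.seq i) := hfold
      _ ≤ Cmax p y r := hmle
  refine ⟨key x, ?_⟩
  haveI : Nonempty (Schedule m n) := ⟨x⟩
  haveI : Nonempty (Fin n) := Fin.pos_iff_nonempty.mp hn
  apply le_ciInf
  intro y
  exact ciSup_le fun j => key y j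
end

section
/- (Combined lower bound.) Let n ≥ 1 and let r : Fin n → ℝ with r j ≥ 0 for all j. Then the optimal makespan satisfies C*(r) ≥ max{ LB₁(r), LB₂(r), LB₃(r) }, where LB₁(r) = max_j ( r j + min_i p i j ), LB₂(r) = max over jobs j of ( min over t ∈ E_j(r) of r t + m⁻¹ ∑ over t ∈ E_j(r) of min_i p i t ), and LB₃(r) = max over jobs j of ( min over t ∈ E_j(r) of r t + ⌈|E_j(r)|/m⌉ · min over t ∈ E_j(r) of min_i p i t ), with E_j(r) = { t : r t ≥ r j }. -/
open Finset

variable {m n : ℕ}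

/-! ### Auxiliary lemmas -/

lemma count_cons_sum (E : Finset (Fin n)) (w : Fin n → ℝ) (j : Fin n) (L : List (Fin n)) :
    ∑ t ∈ E, (((j :: L).count t : ℕ) : ℝ) * w t
      = (∑ t ∈ E, ((L.count t : ℕ) : ℝ) * w t) + (if j ∈ E then w j else 0) := by
  have : ∀ t ∈ E, (((j :: L).count t : ℕ) : ℝ) * w t
      = ((L.count t : ℕ) : ℝ) * w t + (if t = j then w t else 0) := by
    intro t _
    by_cases h : t = j <;> simp [List.count_cons, h, add_mul] <;> intro h' <;> exact absurd h'.symm h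
  rw [Finset.sum_congr rfl this, Finset.sum_add_distrib, Finset.sum_ite_eq' E j w]

lemma foldl_ge_sum (q r w : Fin n → ℝ) (E : Finset (Fin n)) (hq : ∀ t, 0 < q t)
    (hw0 : ∀ t ∈ E, 0 ≤ w t) (hwq : ∀ t ∈ E, w t ≤ q t) :
    ∀ (L : List (Fin n)) (c : ℝ), 0 ≤ c →
      c + ∑ t ∈ E, ((L.count t : ℕ) : ℝ) * w t ≤ L.foldl (fun c j => q j + max c (r j)) c
  | [], c, hc => by simp
  | j :: L, c, hc => by
    have hc' : 0 ≤ q j + max c (r j) :=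
      add_nonneg (hq j).le (le_trans hc (le_max_left _ _))
    have ih := foldl_ge_sum q r w E hq hw0 hwq L (q j + max c (r j)) hc'
    have h1 : (if j ∈ E then w j else 0) ≤ q j := by
      split
      · exact hwq j ‹_›
      · exact (hq j).le
    have h2 : c ≤ max c (r j) := le_max_left _ _
    rw [List.foldl_cons]
    rw [count_cons_sum]
    linarith

lemma foldl_ge_sum' (q r w : Fin n → ℝ) (E : Finset (Fin n)) (ρ : ℝ) (hq : ∀ t, 0 < q t)
    (hw0 : ∀ t ∈ E, 0 ≤ w t) (hwq : ∀ t ∈ E, w t ≤ q t) (hρ : 0 ≤ ρ)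
    (hrE : ∀ t ∈ E, ρ ≤ r t) :
    ∀ (L : List (Fin n)) (c : ℝ), 0 ≤ c → (∃ t ∈ L, t ∈ E) →
      ρ + ∑ t ∈ E, ((L.count t : ℕ) : ℝ) * w t ≤ L.foldl (fun c j => q j + max c (r j)) c
  | [], c, hc, h => by simp at h
  | j :: L, c, hc, h => by
    have hc' : 0 ≤ q j + max c (r j) :=
      add_nonneg (hq j).le (le_trans hc (le_max_left _ _))
    rw [List.foldl_cons, count_cons_sum]
    by_cases hjE : j ∈ E
    · have ih := foldl_ge_sum q r w E hq hw0 hwq L (q j + max c (r j)) hc'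
      have h3 : ρ ≤ r j := hrE j hjE
      have h4 : r j ≤ max c (r j) := le_max_right _ _
      have h5 : w j ≤ q j := hwq j hjE
      simp only [if_pos hjE]
      linarith
    · obtain ⟨t, ht, htE⟩ := h
      have ht' : t ∈ L := by
        rcases List.mem_cons.mp ht with h' | h'
        · exact absurd (h' ▸ htE) hjE
        · exact h'
      have ih := foldl_ge_sum' q r w E ρ hq hw0 hwq hρ hrE L (q j + max c (r j)) hc'
        ⟨t, ht', htE⟩
      simp only [if_neg hjE, add_zero]
      exact ih

lemma exists_machine (x : Schedule m n) (j : Fin n) : ∃ i, j ∈ x.seq i := by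
  by_contra h
  push_neg at h
  have : ∑ i : Fin m, (x.seq i).count j = 0 :=
    Finset.sum_eq_zero fun i _ => List.count_eq_zero.mpr (h i)
  rw [x.valid j] at this
  exact one_ne_zero this

lemma mComp_le_Cmax (p : Fin m → Fin n → ℝ) (x : Schedule m n) (r : Fin n → ℝ) (i : Fin m) :
    mComp (p i) r (x.seq i) ≤ Cmax p x r := by
  unfold Cmax
  exact le_ciSup (Finite.bddAbove_range fun i => mComp (p i) r (x.seq i)) i

/-- Key machine bound. -/
lemma key_bound {m n : ℕ} (hm : 0 < m) (p : Fin m → Fin n → ℝ) (hp : ∀ i j, 0 < p i j)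
    (r : Fin n → ℝ) (hr : ∀ j, 0 ≤ r j) (x : Schedule m n)
    (E : Finset (Fin n)) (w : Fin n → ℝ) (j : Fin n) (hjE : j ∈ E)
    (hw0 : ∀ t ∈ E, 0 ≤ w t) (hwp : ∀ t ∈ E, ∀ i, w t ≤ p i t)
    (hrE : ∀ t ∈ E, r j ≤ r t) :
    ∀ i, r j + ∑ t ∈ E, (((x.seq i).count t : ℕ) : ℝ) * w t ≤ Cmax p x r := by
  obtain ⟨i₀, hi₀⟩ := exists_machine x j
  intro i
  by_cases hE : ∃ t ∈ x.seq i, t ∈ E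
  · exact le_trans
      (foldl_ge_sum' (p i) r w E (r j) (hp i) hw0 (fun t ht => hwp t ht i) (hr j) hrE
        (x.seq i) 0 le_rfl hE)
      (mComp_le_Cmax p x r i)
  · have hz : ∀ t ∈ E, ((x.seq i).count t : ℕ) = 0 := fun t ht =>
      List.count_eq_zero.mpr fun hmem => hE ⟨t, hmem, ht⟩
    have hsum : ∑ t ∈ E, (((x.seq i).count t : ℕ) : ℝ) * w t = 0 :=
      Finset.sum_eq_zero fun t ht => by rw [hz t ht]; simp
    rw [hsum, add_zero]
    have h1 : r j + ∑ t ∈ E, (((x.seq i₀).count t : ℕ) : ℝ) * w t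
        ≤ mComp (p i₀) r (x.seq i₀) :=
      foldl_ge_sum' (p i₀) r w E (r j) (hp i₀) hw0 (fun t ht => hwp t ht i₀) (hr j) hrE
        (x.seq i₀) 0 le_rfl ⟨j, hi₀, hjE⟩
    have h2 : 0 ≤ ∑ t ∈ E, (((x.seq i₀).count t : ℕ) : ℝ) * w t :=
      Finset.sum_nonneg fun t ht => mul_nonneg (by positivity) (hw0 t ht)
    linarith [mComp_le_Cmax p x r i₀]

lemma sum_counts (x : Schedule m n) (E : Finset (Fin n)) (w : Fin n → ℝ) :
    ∑ i : Fin m, ∑ t ∈ E, (((x.seq i).count t : ℕ) : ℝ) * w t = ∑ t ∈ E, w t := by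
  rw [Finset.sum_comm]
  refine Finset.sum_congr rfl fun t _ => ?_
  rw [← Finset.sum_mul]
  have : ∑ i : Fin m, (((x.seq i).count t : ℕ) : ℝ) = 1 := by
    rw [← Nat.cast_sum, x.valid t, Nat.cast_one]
  rw [this, one_mul]

lemma inf'_r_le (r : Fin n → ℝ) (j : Fin n) :
    (Ej r j).inf' (Ej_nonempty r j) r ≤ r j :=
  Finset.inf'_le r (by simp [Ej])

/-- Combined lower bound:
`C*(r) ≥ max {LB₁(r), LB₂(r), LB₃(r)}`. -/
theorem combined_lower_bound {m n : ℕ} (hm : 0 < m) (hn : 1 ≤ n)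
    (p : Fin m → Fin n → ℝ) (hp : ∀ i j, 0 < p i j)
    (r : Fin n → ℝ) (hr : ∀ j, 0 ≤ r j) :
    max (LB1 p r) (max (LB2 p r) (LB3 p r)) ≤ Cstar p r := by
  haveI : NeZero m := ⟨hm.ne'⟩
  haveI : Nonempty (Fin m) := ⟨⟨0, hm⟩⟩
  haveI : Nonempty (Fin n) := ⟨⟨0, hn⟩⟩
  haveI : Nonempty (Schedule m n) := by
    refine ⟨⟨fun i => if i = ⟨0, hm⟩ then List.finRange n else [], fun j => ?_⟩⟩
    rw [Finset.sum_eq_single (⟨0, hm⟩ : Fin m)]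
    · simp [List.count_eq_one_of_mem (List.nodup_finRange n) (List.mem_finRange j)]
    · intro i _ hi; have hi' : i ≠ 0 := fun h => hi (Fin.ext (by simp [h])); simp [hi']
    · simp
  have hinf0 : ∀ t : Fin n, 0 ≤ ⨅ i : Fin m, p i t := fun t =>
    le_ciInf fun i => (hp i t).le
  have hinfle : ∀ (t : Fin n) (i : Fin m), (⨅ i' : Fin m, p i' t) ≤ p i t := fun t i =>
    ciInf_le (Finite.bddBelow_range _) i
  refine le_ciInf fun x => ?_
  refine max_le ?_ (max_le ?_ ?_)
  · -- LB1
    refine ciSup_le fun j => ?_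
    obtain ⟨i₀, hi₀⟩ := exists_machine x j
    have hkey := key_bound hm p hp r hr x {j} (fun t => ⨅ i : Fin m, p i t) j
      (Finset.mem_singleton_self j) (fun t _ => hinf0 t) (fun t _ i => hinfle t i)
      (fun t ht => by rw [Finset.mem_singleton.mp ht]) i₀
    rw [Finset.sum_singleton] at hkey
    have hc1 : (1 : ℝ) ≤ (((x.seq i₀).count j : ℕ) : ℝ) := by
      exact_mod_cast Nat.one_le_iff_ne_zero.mpr (List.count_eq_zero.not.mpr (by simpa using hi₀))
    nlinarith [hinf0 j]
  · -- LB2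
    refine ciSup_le fun j => ?_
    set E := Ej r j with hE
    set w : Fin n → ℝ := fun t => ⨅ i : Fin m, p i t with hw
    have hrE : ∀ t ∈ E, r j ≤ r t := fun t ht => by simpa [hE, Ej] using ht
    have hkey := key_bound hm p hp r hr x E w j (by simp [hE, Ej])
      (fun t _ => hinf0 t) (fun t _ i => hinfle t i) hrE
    have hsum : ∑ i : Fin m, ∑ t ∈ E, (((x.seq i).count t : ℕ) : ℝ) * w t
        = ∑ t ∈ E, w t := sum_counts x E w
    have hle : ∑ t ∈ E, w t ≤ (m : ℝ) * (Cmax p x r - r j) := by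
      rw [← hsum]
      calc ∑ i : Fin m, ∑ t ∈ E, (((x.seq i).count t : ℕ) : ℝ) * w t
          ≤ ∑ _i : Fin m, (Cmax p x r - r j) :=
            Finset.sum_le_sum fun i _ => by linarith [hkey i]
        _ = (m : ℝ) * (Cmax p x r - r j) := by
            rw [Finset.sum_const, Finset.card_univ, Fintype.card_fin, nsmul_eq_mul]
    have hmpos : (0 : ℝ) < m := by exact_mod_cast hm
    have h2 : (m : ℝ)⁻¹ * ∑ t ∈ E, w t ≤ Cmax p x r - r j := by
      rw [inv_mul_le_iff₀ hmpos]
      exact hle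
    have := inf'_r_le r j
    simp only [W2]
    change (Ej r j).inf' (Ej_nonempty r j) r + (m : ℝ)⁻¹ * ∑ t ∈ Ej r j, ⨅ i, p i t
      ≤ Cmax p x r
    linarith
  · -- LB3
    refine ciSup_le fun j => ?_
    set E := Ej r j with hE
    set Q : ℝ := (Ej r j).inf' (Ej_nonempty r j) (fun t => ⨅ i : Fin m, p i t) with hQ
    have hQ0 : 0 ≤ Q := Finset.le_inf' _ _ fun t _ => hinf0 t
    have hQle : ∀ t ∈ E, ∀ i, Q ≤ p i t := fun t ht i =>
      le_trans (Finset.inf'_le _ ht) (hinfle t i)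
    have hrE : ∀ t ∈ E, r j ≤ r t := fun t ht => by simpa [hE, Ej] using ht
    have hkey := key_bound hm p hp r hr x E (fun _ => Q) j (by simp [hE, Ej])
      (fun t _ => hQ0) hQle hrE
    set N : Fin m → ℕ := fun i => ∑ t ∈ E, (x.seq i).count t with hN
    have hNsum : ∑ i : Fin m, N i = E.card := by
      rw [hN, Finset.sum_comm]
      simp [x.valid]
    have hmpos : (0 : ℝ) < m := by exact_mod_cast hm
    obtain ⟨i, _, hi⟩ : ∃ i ∈ (Finset.univ : Finset (Fin m)),
        (E.card : ℝ) / m ≤ (N i : ℝ) := by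
      refine Finset.exists_le_of_sum_le Finset.univ_nonempty ?_
      rw [Finset.sum_const, Finset.card_univ, Fintype.card_fin, nsmul_eq_mul,
        mul_div_cancel₀ _ hmpos.ne']
      rw [← Nat.cast_sum, hNsum]
    have hceil : ((⌈(E.card : ℝ) / m⌉ : ℤ) : ℝ) ≤ (N i : ℝ) := by
      have : (⌈(E.card : ℝ) / m⌉ : ℤ) ≤ (N i : ℤ) := Int.ceil_le.mpr (by exact_mod_cast hi)
      exact_mod_cast this
    have hkeyi := hkey i
    have hsumQ : ∑ t ∈ E, (((x.seq i).count t : ℕ) : ℝ) * Q = (N i : ℝ) * Q := by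
      rw [hN, ← Finset.sum_mul, ← Nat.cast_sum]
    rw [hsumQ] at hkeyi
    have hmul : ((⌈(E.card : ℝ) / m⌉ : ℤ) : ℝ) * Q ≤ (N i : ℝ) * Q :=
      mul_le_mul_of_nonneg_right hceil hQ0
    have := inf'_r_le r j
    simp only [W3]
    change (Ej r j).inf' (Ej_nonempty r j) r +
      ((⌈((Ej r j).card : ℝ) / (m : ℝ)⌉ : ℤ) : ℝ) *
        (Ej r j).inf' (Ej_nonempty r j) (fun t => ⨅ i, p i t) ≤ Cmax p x r
    linarith
end

section
/- (Core of Property 3, dominant late job.) Suppose n ≥ 2 and there is a job j such that max over k ≠ j of r⁺ k + ∑ over k ≠ j of ( max over machines i of p i k ) ≤ r⁻ j. Then for every scenario r ∈ R the optimal makespan equals C*(r) = r j + min over machines i of p i j, and there exists a schedule x (placing j alone, last, on a machine minimizing p i j) whose worst-case regret is zero: Z(x) = 0. -/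
open Finset

variable {m n : ℕ}

section auxFold
variable {n : ℕ}

lemma foldl_ge_init (q r : Fin n → ℝ) (hq : ∀ k, 0 ≤ q k) :
    ∀ (L : List (Fin n)) (c : ℝ), c ≤ L.foldl (fun c j => q j + max c (r j)) c := by
  intro L
  induction L with
  | nil => intro c; simp
  | cons a t ih =>
    intro c
    have h1 : c ≤ q a + max c (r a) := by
      have := le_max_left c (r a); have := hq a; linarith
    exact le_trans h1 (ih _)

lemma foldl_ge_mem (q r : Fin n → ℝ) (hq : ∀ k, 0 ≤ q k) {j : Fin n} :
    ∀ (L : List (Fin n)) (c : ℝ), j ∈ L →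
      r j + q j ≤ L.foldl (fun c k => q k + max c (r k)) c := by
  intro L
  induction L with
  | nil => simp
  | cons a t ih =>
    intro c hmem
    rcases List.mem_cons.mp hmem with h | h
    · subst h
      refine le_trans ?_ (foldl_ge_init q r hq t _)
      show r j + q j ≤ q j + max c (r j)
      have := le_max_right c (r j); linarith
    · exact ih _ h

lemma foldl_le_bound (q r : Fin n → ℝ) (hq : ∀ k, 0 ≤ q k) (A : ℝ) :
    ∀ (L : List (Fin n)) (c : ℝ), (∀ k ∈ L, r k ≤ A) →
      L.foldl (fun c k => q k + max c (r k)) c ≤ max A c + (L.map q).sum := by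
  intro L
  induction L with
  | nil => intro c _; simp [le_max_right]
  | cons a t ih =>
    intro c hA
    have h1 := ih (q a + max c (r a)) (fun k hk => hA k (List.mem_cons_of_mem _ hk))
    have h2 : max A (q a + max c (r a)) ≤ q a + max A c := by
      apply max_le
      · have := le_max_left A c; have := hq a; linarith
      · have : max c (r a) ≤ max A c :=
          max_le (le_max_right A c) (le_trans (hA a (by simp)) (le_max_left A c))
        linarith
    simp only [List.foldl_cons, List.map_cons, List.sum_cons]
    calc t.foldl (fun c k => q k + max c (r k)) (q a + max c (r a))
        ≤ max A (q a + max c (r a)) + (t.map q).sum := h1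
      _ ≤ q a + max A c + (t.map q).sum := by linarith
      _ = max A c + (q a + (t.map q).sum) := by ring

end auxFold

/-- core of Property 3, dominant late job: if
`max_{k ≠ j} r⁺ k + ∑_{k ≠ j} max_i p i k ≤ r⁻ j`, then under every
scenario the optimal makespan is `r j + min_i p i j`, and some schedule has
worst-case regret zero. -/
theorem dominant_late_job {m n : ℕ} (hm : 0 < m) (hn : 2 ≤ n)
    (p : Fin m → Fin n → ℝ) (hp : ∀ i j, 0 < p i j)
    (rlo rhi : Fin n → ℝ) (hlo : ∀ j, 0 ≤ rlo j) (hlt : ∀ j, rlo j < rhi j)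
    (j : Fin n)
    (hdom : (⨆ k : {k : Fin n // k ≠ j}, rhi (k : Fin n)) +
        ∑ k ∈ Finset.univ.erase j, ⨆ i : Fin m, p i k ≤ rlo j) :
    (∀ r ∈ box rlo rhi, Cstar p r = r j + ⨅ i : Fin m, p i j) ∧
      ∃ x : Schedule m n, Zreg p x rlo rhi = 0 := by
  haveI hmne : Nonempty (Fin m) := ⟨⟨0, hm⟩⟩
  haveI : Nontrivial (Fin n) := Fin.nontrivial_iff_two_le.mpr hn
  -- minimizing machine for job j
  obtain ⟨istar, -, histar⟩ :=
    Finset.exists_min_image Finset.univ (fun i => p i j) ⟨Classical.arbitrary _, Finset.mem_univ _⟩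
  have histar' : ∀ i, p istar j ≤ p i j := fun i => histar i (Finset.mem_univ i)
  have hinf : (⨅ i : Fin m, p i j) = p istar j :=
    le_antisymm (ciInf_le (Finite.bddBelow_range _) istar) (le_ciInf histar')
  -- the list of other jobs
  set L0 : List (Fin n) := (Finset.univ.erase j).toList with hL0
  have hjL0 : j ∉ L0 := by simp [hL0, Finset.mem_toList]
  -- the schedule
  have hvalid : ∀ t : Fin n,
      (∑ i : Fin m, ((if i = istar then L0 ++ [j] else []).count t)) = 1 := by
    intro t
    rw [Fintype.sum_eq_single istar (fun i hi => by simp [hi]), if_pos rfl,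
      List.count_append]
    by_cases ht : t = j
    · subst ht
      rw [List.count_eq_zero_of_not_mem hjL0]
      simp
    · rw [List.count_eq_one_of_mem (Finset.nodup_toList _)
        (by simp [hL0, Finset.mem_toList, ht])]
      simp [List.count_singleton', ht, Ne.symm ht]
  set x : Schedule m n := ⟨fun i => if i = istar then L0 ++ [j] else [], hvalid⟩ with hx
  -- the bound A on other release dates
  set A : ℝ := ⨆ k : {k : Fin n // k ≠ j}, rhi (k : Fin n) with hA
  obtain ⟨k0, hk0⟩ := exists_ne j
  have hAk : ∀ k : Fin n, k ≠ j → rhi k ≤ A := by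
    intro k hk
    rw [hA]
    exact le_ciSup (f := fun k : {k : Fin n // k ≠ j} => rhi (k : Fin n))
      (Finite.bddAbove_range _) ⟨k, hk⟩
  have hA0 : 0 ≤ A := le_trans (le_trans (hlo k0) (hlt k0).le) (hAk k0 hk0)
  have hpnn : ∀ k, 0 ≤ p istar k := fun k => (hp istar k).le
  -- the completion of machine istar equals r j + p istar j, for r in the box
  have hCprev : ∀ r ∈ box rlo rhi, mComp (p istar) r L0 ≤ rlo j := by
    intro r hr
    have h1 : mComp (p istar) r L0 ≤ max A 0 + (L0.map (p istar)).sum := by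
      apply foldl_le_bound (p istar) r hpnn A L0 0
      intro k hk
      have hkj : k ≠ j := by
        rintro rfl; exact hjL0 hk
      exact le_trans (hr k).2 (hAk k hkj)
    have h2 : (L0.map (p istar)).sum = ∑ k ∈ Finset.univ.erase j, p istar k :=
      Finset.sum_map_toList _ _
    have h3 : (∑ k ∈ Finset.univ.erase j, p istar k) ≤
        ∑ k ∈ Finset.univ.erase j, ⨆ i : Fin m, p i k :=
      Finset.sum_le_sum fun k _ =>
        le_ciSup (f := fun i => p i k) (Finite.bddAbove_range _) istar
    rw [h2, max_eq_left hA0] at h1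
    linarith [hdom]
  have hmachine : ∀ r ∈ box rlo rhi, mComp (p istar) r (L0 ++ [j]) = r j + p istar j := by
    intro r hr
    have hCle : mComp (p istar) r L0 ≤ r j := le_trans (hCprev r hr) (hr j).1
    show (L0 ++ [j]).foldl (fun c k => p istar k + max c (r k)) 0 = r j + p istar j
    rw [List.foldl_append]
    show p istar j + max (mComp (p istar) r L0) (r j) = r j + p istar j
    rw [max_eq_right hCle]; ring
  -- makespan of x on the box
  have hCmax : ∀ r ∈ box rlo rhi, Cmax p x r = r j + p istar j := by
    intro r hr
    have hrj : 0 ≤ r j := le_trans (hlo j) (hr j).1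
    apply le_antisymm
    · apply ciSup_le
      intro i
      by_cases hi : i = istar
      · subst hi
        simp only [hx, if_pos rfl]
        exact (hmachine r hr).le
      · simp only [hx, if_neg hi]
        show (0:ℝ) ≤ r j + p istar j
        have := hp istar j; linarith
    · have := le_ciSup (Finite.bddAbove_range fun i => mComp (p i) r (x.seq i)) istar
      simp only [hx, if_pos rfl] at this ⊢
      rw [← hmachine r hr]
      exact this
  -- lower bound for any schedule
  have hlb : ∀ (r : Fin n → ℝ) (y : Schedule m n), r j + p istar j ≤ Cmax p y r := by
    intro r y
    have : ∃ i : Fin m, j ∈ y.seq i := by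
      by_contra h
      push_neg at h
      have := y.valid j
      rw [Finset.sum_eq_zero (fun i _ => List.count_eq_zero_of_not_mem (h i))] at this
      exact absurd this (by norm_num)
    obtain ⟨i, hi⟩ := this
    have h1 : r j + p i j ≤ mComp (p i) r (y.seq i) :=
      foldl_ge_mem (p i) r (fun k => (hp i k).le) (y.seq i) 0 hi
    refine le_trans (le_trans ?_ h1)
      (le_ciSup (Finite.bddAbove_range fun i => mComp (p i) r (y.seq i)) i)
    linarith [histar' i]
  haveI : Nonempty (Schedule m n) := ⟨x⟩
  -- Cstar on the box
  have hCstar : ∀ r ∈ box rlo rhi, Cstar p r = r j + p istar j := by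
    intro r hr
    apply le_antisymm
    · exact le_trans (ciInf_le ⟨r j + p istar j, by rintro v ⟨y, rfl⟩; exact hlb r y⟩ x)
        (hCmax r hr).le
    · exact le_ciInf (hlb r)
  constructor
  · intro r hr
    rw [hCstar r hr, hinf]
  · refine ⟨x, ?_⟩
    have himg : (fun r => regret p x r) '' box rlo rhi = {0} := by
      apply Set.eq_singleton_iff_nonempty_unique_mem.mpr
      constructor
      · exact ⟨regret p x rlo, ⟨rlo, fun k => ⟨le_refl _, (hlt k).le⟩, rfl⟩⟩
      · rintro v ⟨r, hr, rfl⟩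
        simp only [regret, hCmax r hr, hCstar r hr, sub_self]
    rw [Zreg, himg]
    · exact csSup_singleton 0
end
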